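/- Let U₁, U₂ be unitaries on a system Q and let R be any finite-dimensional ancilla. Then min over unit vectors Φ in Q⊗R of |⟨Φ|(U₁†U₂ ⊗ 1_R)|Φ⟩|² equals min over unit vectors φ in Q of |⟨φ|U₁†U₂|φ⟩|²; i.e., entanglement with an ancilla does not decrease the minimal overlap. -/

import Mathlib

open Matrix BigOperators Kronecker Module.End
set_option maxHeartbeats 1000000


lemma unitary_eigenbasis {d : ℕ} (V : Matrix (Fin d) (Fin d) ℂ)
    (hV : V ∈ Matrix.unitaryGroup (Fin d) ℂ) :
    ∃ (w : Fin d → Fin d → ℂ) (μ : Fin d → ℂ),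
      (∀ k l, star (w k) ⬝ᵥ w l = if k = l then (1:ℂ) else 0) ∧
      (∀ k, V.mulVec (w k) = μ k • w k) := by
  classical
  set T : EuclideanSpace ℂ (Fin d) →ₗ[ℂ] EuclideanSpace ℂ (Fin d) := Matrix.toEuclideanLin V with hT
  set T' : EuclideanSpace ℂ (Fin d) →ₗ[ℂ] EuclideanSpace ℂ (Fin d) := Matrix.toEuclideanLin Vᴴ with hT'
  have hadj : T' = LinearMap.adjoint T := Matrix.toEuclideanLin_conjTranspose_eq_adjoint V
  have hmul : ∀ (M N : Matrix (Fin d) (Fin d) ℂ),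
      (Matrix.toEuclideanLin M) * (Matrix.toEuclideanLin N) = Matrix.toEuclideanLin (M * N) := by
    intro M N
    ext x
    simp [Module.End.mul_apply, Matrix.toEuclideanLin_apply, Matrix.mulVec_mulVec]
  have h1 : V * Vᴴ = 1 := by
    simpa [Matrix.star_eq_conjTranspose] using (Matrix.mem_unitaryGroup_iff).mp hV
  have h2 : Vᴴ * V = 1 := by
    simpa [Matrix.star_eq_conjTranspose] using (Matrix.mem_unitaryGroup_iff').mp hV
  have hcomm : Commute T T' := by
    unfold Commute SemiconjBy
    rw [hT, hT', hmul, hmul, h1, h2]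
  have s1 : star T = T' := by rw [LinearMap.star_eq_adjoint, ← hadj]
  have s2 : star T' = T := by rw [LinearMap.star_eq_adjoint, hadj, LinearMap.adjoint_adjoint]
  set A := T + T' with hA
  set B := Complex.I • (T - T') with hB
  have hAsym : A.IsSymmetric := by
    rw [LinearMap.isSymmetric_iff_isSelfAdjoint]
    show star A = A
    rw [hA, star_add, s1, s2, add_comm]
  have hBsym : B.IsSymmetric := by
    rw [LinearMap.isSymmetric_iff_isSelfAdjoint]
    show star B = B
    rw [hB, star_smul, star_sub, s1, s2]
    simp only [Complex.star_def, Complex.conj_I, neg_smul, smul_sub]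
    module
  have hABcomm : Commute A B := by
    have h3 : Commute (T + T') (T - T') :=
      (((Commute.refl T).sub_right hcomm).add_left ((hcomm.symm).sub_right (Commute.refl T')))
    exact h3.smul_right Complex.I
  set F : ℂ × ℂ → Submodule ℂ (EuclideanSpace ℂ (Fin d)) := fun i =>
    eigenspace A i.2 ⊓ eigenspace B i.1 with hF
  have internal : DirectSum.IsInternal F :=
    hAsym.directSum_isInternal_of_commute hBsym hABcomm
  haveI : Fintype {i : ℂ × ℂ // F i ≠ ⊥} :=
    internal.submodule_iSupIndep.fintypeNeBotOfFiniteDimensional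
  have internal₀ : DirectSum.IsInternal (fun i : {i : ℂ × ℂ // F i ≠ ⊥} => F ↑i) :=
    DirectSum.isInternal_ne_bot_iff.mpr internal
  have orthfam := hAsym.orthogonalFamily_eigenspace_inf_eigenspace hBsym
  have orthfam₀ := orthfam.comp (γ := {i : ℂ × ℂ // F i ≠ ⊥}) (f := Subtype.val)
      Subtype.val_injective
  have hn : Module.finrank ℂ (EuclideanSpace ℂ (Fin d)) = d := finrank_euclideanSpace_fin
  let b := internal₀.subordinateOrthonormalBasis hn orthfam₀
  let idx : Fin d → ℂ × ℂ := fun k => ↑(internal₀.subordinateOrthonormalBasisIndex hn k orthfam₀)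
  refine ⟨fun k => b k, fun k => ((idx k).2 - Complex.I * (idx k).1) / 2, ?_, ?_⟩
  · intro k l
    have h := orthonormal_iff_ite.mp b.orthonormal k l
    rw [dotProduct_comm]
    simpa [EuclideanSpace.inner_eq_star_dotProduct] using h
  · intro k
    have hmem := internal₀.subordinateOrthonormalBasis_subordinate hn k orthfam₀
    obtain ⟨hmemA, hmemB⟩ := hmem
    rw [SetLike.mem_coe, mem_eigenspace_iff] at hmemA
    rw [SetLike.mem_coe, mem_eigenspace_iff] at hmemB
    have hmemA' : A (b k) = (idx k).2 • (b k) := hmemA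
    have hmemB' : B (b k) = (idx k).1 • (b k) := hmemB
    have h2T : A (b k) - Complex.I • B (b k) = (2:ℂ) • T (b k) := by
      rw [hA, hB]
      simp only [LinearMap.add_apply, LinearMap.smul_apply, LinearMap.sub_apply, smul_smul,
        Complex.I_mul_I, smul_sub]
      module
    have hTbk : T (b k) = (((idx k).2 - Complex.I * (idx k).1) / 2) • b k := by
      have h2T' : (2:ℂ) • T (b k) = ((idx k).2 - Complex.I * (idx k).1) • b k := by
        rw [← h2T, hmemA', hmemB', smul_smul, ← sub_smul]
      have := congrArg (fun x => ((2:ℂ)⁻¹) • x) h2T'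
      simp only [smul_smul] at this
      rw [inv_mul_cancel₀ (two_ne_zero), one_smul] at this
      rw [this]
      congr 1
      ring
    have hTbk' := congrArg WithLp.ofLp hTbk
    simpa [hT, Matrix.toEuclideanLin_apply] using hTbk'


lemma dot_sum_sum {n ι : Type*} [Fintype n] [Fintype ι] (f : ι → n → ℂ) (g : ι → n → ℂ) :
    (∑ k, f k) ⬝ᵥ (∑ l, g l) = ∑ k, ∑ l, f k ⬝ᵥ g l := by
  simp only [dotProduct, Finset.sum_apply, Finset.sum_mul_sum]
  rw [Finset.sum_comm]
  congr 1; ext k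
  rw [Finset.sum_comm]

lemma dot_sum {n ι : Type*} [Fintype n] [Fintype ι] (v : n → ℂ) (g : ι → n → ℂ) :
    v ⬝ᵥ (∑ l, g l) = ∑ l, v ⬝ᵥ g l := by
  simp only [dotProduct, Finset.sum_apply, Finset.mul_sum]
  exact Finset.sum_comm

lemma quad_form_set_eq {n ι : Type*} [Fintype n] [Fintype ι] [Nonempty ι] [DecidableEq n] [DecidableEq ι]
    (M : Matrix n n ℂ) (w : ι → n → ℂ) (μ : ι → ℂ)
    (horth : ∀ k l, star (w k) ⬝ᵥ w l = if k = l then (1:ℂ) else 0)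
    (heig : ∀ k, M.mulVec (w k) = μ k • w k)
    (hcard : Fintype.card ι = Fintype.card n) :
    {x : ℝ | ∃ φ : n → ℂ, (∑ a, ‖φ a‖ ^ 2) = 1 ∧ x = ‖star φ ⬝ᵥ M.mulVec φ‖ ^ 2} =
    {x : ℝ | ∃ p : ι → ℝ, (∀ k, 0 ≤ p k) ∧ (∑ k, p k) = 1 ∧
        x = ‖∑ k, (p k : ℂ) * μ k‖ ^ 2} := by
  classical
  have hdot : ∀ c c' : ι → ℂ, star (∑ k, c k • w k) ⬝ᵥ (∑ k, c' k • w k) =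
      ∑ k, (starRingEnd ℂ) (c k) * c' k := by
    intro c c'
    rw [star_sum]
    rw [show (fun k => star (c k • w k)) = (fun k => (starRingEnd ℂ) (c k) • star (w k)) by
      ext k; rw [star_smul]; rfl]
    rw [dot_sum_sum]
    have : ∀ k l, ((starRingEnd ℂ) (c k) • star (w k)) ⬝ᵥ (c' l • w l) =
        (starRingEnd ℂ) (c k) * c' l * (star (w k) ⬝ᵥ w l) := by
      intro k l
      rw [smul_dotProduct, dotProduct_smul]
      simp [smul_eq_mul]; ring
    simp only [this, horth, mul_ite, mul_one, mul_zero]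
    simp
  have hMV : ∀ c : ι → ℂ, M.mulVec (∑ k, c k • w k) = ∑ k, (c k * μ k) • w k := by
    intro c
    have h1 : M.mulVec (∑ k, c k • w k) = ∑ k, c k • M.mulVec (w k) := by
      rw [show (M.mulVec : (n → ℂ) → (n → ℂ)) = M.mulVecLin from rfl, map_sum]
      simp
    rw [h1]
    congr 1; ext k
    rw [heig k, smul_smul]
  have hnorm : ∀ φ : n → ℂ, ((∑ a, ‖φ a‖ ^ 2 : ℝ) : ℂ) = star φ ⬝ᵥ φ := by
    intro φ
    rw [dotProduct]
    push_cast
    congr 1; ext a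
    simp only [Pi.star_apply, RCLike.star_def]
    rw [RCLike.conj_mul (φ a)]
    norm_cast
  have hli : LinearIndependent ℂ w := by
    rw [Fintype.linearIndependent_iff]
    intro g hg k
    have h0 : star (w k) ⬝ᵥ (∑ l, g l • w l) = g k := by
      have : ∀ l, star (w k) ⬝ᵥ (g l • w l) = g l * (star (w k) ⬝ᵥ w l) := by
        intro l; rw [dotProduct_smul]; simp [smul_eq_mul]
      rw [dot_sum]
      simp only [this, horth, mul_ite, mul_one, mul_zero]
      simp
    rw [hg] at h0
    simpa using h0.symm
  have hspan : ∀ φ : n → ℂ, ∃ c : ι → ℂ, φ = ∑ k, c k • w k := by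
    intro φ
    have hrank : Fintype.card ι = Module.finrank ℂ (n → ℂ) := by
      rw [Module.finrank_fintype_fun_eq_card, hcard]
    let bas : Module.Basis ι ℂ (n → ℂ) := basisOfLinearIndependentOfCardEqFinrank hli hrank
    refine ⟨fun k => bas.repr φ k, ?_⟩
    have hb := bas.sum_repr φ
    conv_lhs => rw [← hb]
    congr 1; ext k
    rw [show bas k = w k from congrFun (coe_basisOfLinearIndependentOfCardEqFinrank hli hrank) k]
  ext x
  simp only [Set.mem_setOf_eq]
  constructor
  · rintro ⟨φ, hφ1, rfl⟩
    obtain ⟨c, rfl⟩ := hspan φ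
    have hkey : ∀ k, (starRingEnd ℂ) (c k) * c k = ((‖c k‖ ^ 2 : ℝ) : ℂ) := by
      intro k; rw [RCLike.conj_mul]; norm_cast
    refine ⟨fun k => ‖c k‖ ^ 2, fun k => by positivity, ?_, ?_⟩
    · have h1 : ((∑ k, ‖c k‖ ^ 2 : ℝ) : ℂ) = ((1:ℝ) : ℂ) := by
        rw [← hφ1, hnorm, hdot]
        simp only [hkey]
        norm_cast
      exact_mod_cast h1
    · have h2 : star (∑ k, c k • w k) ⬝ᵥ M.mulVec (∑ k, c k • w k) =
          ∑ k, ((‖c k‖ ^ 2 : ℝ) : ℂ) * μ k := by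
        rw [hMV, hdot]
        refine Finset.sum_congr rfl fun k _ => ?_
        rw [← mul_assoc, hkey k]
      rw [h2]
  · rintro ⟨p, hp0, hp1, rfl⟩
    set c : ι → ℂ := fun k => ((Real.sqrt (p k) : ℝ) : ℂ) with hc
    have hkey : ∀ k, (starRingEnd ℂ) (c k) * c k = ((p k : ℝ) : ℂ) := by
      intro k
      rw [hc]
      simp only [Complex.conj_ofReal]
      rw [← Complex.ofReal_mul, Real.mul_self_sqrt (hp0 k)]
    refine ⟨∑ k, c k • w k, ?_, ?_⟩
    · have h1 : ((∑ a, ‖(∑ k, c k • w k) a‖ ^ 2 : ℝ) : ℂ) = ((1:ℝ) : ℂ) := by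
        rw [hnorm, hdot]
        simp only [hkey]
        rw [← hp1]
        norm_cast
      exact_mod_cast h1
    · have h2 : star (∑ k, c k • w k) ⬝ᵥ M.mulVec (∑ k, c k • w k) =
          ∑ k, ((p k : ℝ) : ℂ) * μ k := by
        rw [hMV, hdot]
        refine Finset.sum_congr rfl fun k _ => ?_
        rw [← mul_assoc, hkey k]
      rw [h2]


lemma prob_set_eq {d r : ℕ} (hr : 0 < r) (μ : Fin d → ℂ) :
    {x : ℝ | ∃ p : Fin d × Fin r → ℝ, (∀ k, 0 ≤ p k) ∧ (∑ k, p k) = 1 ∧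
        x = ‖∑ k, (p k : ℂ) * μ k.1‖ ^ 2} =
    {x : ℝ | ∃ p : Fin d → ℝ, (∀ k, 0 ≤ p k) ∧ (∑ k, p k) = 1 ∧
        x = ‖∑ k, (p k : ℂ) * μ k‖ ^ 2} := by
  classical
  ext x
  simp only [Set.mem_setOf_eq]
  constructor
  · rintro ⟨p, hp0, hp1, rfl⟩
    refine ⟨fun k => ∑ j, p (k, j), fun k => Finset.sum_nonneg fun j _ => hp0 _, ?_, ?_⟩
    · rw [← hp1, ← Fintype.sum_prod_type]
    · have h : (∑ k : Fin d × Fin r, ((p k : ℂ)) * μ k.1) =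
          ∑ k : Fin d, (((∑ j, p (k,j)) : ℝ) : ℂ) * μ k := by
        rw [Fintype.sum_prod_type]
        refine Finset.sum_congr rfl fun k _ => ?_
        push_cast
        rw [Finset.sum_mul]
      rw [h]
  · rintro ⟨p, hp0, hp1, rfl⟩
    set q : Fin d × Fin r → ℝ := fun kj => if kj.2 = (⟨0, hr⟩ : Fin r) then p kj.1 else 0 with hq
    have hq0 : ∀ kj, 0 ≤ q kj := by
      intro kj
      rw [hq]
      dsimp only
      split
      · exact hp0 _
      · exact le_rfl
    have hqsum : (∑ kj : Fin d × Fin r, q kj) = 1 := by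
      rw [hq, Fintype.sum_prod_type]
      simp only [Finset.sum_ite_eq' Finset.univ, Finset.mem_univ, if_true]
      exact hp1
    have hqval : (∑ kj : Fin d × Fin r, ((q kj : ℂ)) * μ kj.1) =
        ∑ k : Fin d, ((p k : ℂ)) * μ k := by
      rw [hq, Fintype.sum_prod_type]
      refine Finset.sum_congr rfl fun k _ => ?_
      simp [apply_ite, Finset.sum_ite_eq' Finset.univ, ite_mul]
    exact ⟨q, hq0, hqsum, by rw [hqval]⟩


lemma dot_kron {n m : Type*} [Fintype n] [Fintype m] (u v : n → ℂ) (x y : m → ℂ) :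
    star (fun p : n × m => u p.1 * x p.2) ⬝ᵥ (fun p : n × m => v p.1 * y p.2) =
      (star u ⬝ᵥ v) * (star x ⬝ᵥ y) := by
  simp only [dotProduct, Pi.star_apply, Finset.sum_mul_sum]
  rw [Fintype.sum_prod_type]
  refine Finset.sum_congr rfl fun a _ => Finset.sum_congr rfl fun b _ => ?_
  simp only [star_mul']
  ring

lemma kron_orth {d r : ℕ} (w : Fin d → Fin d → ℂ)
    (horth : ∀ k l, star (w k) ⬝ᵥ w l = if k = l then (1:ℂ) else 0)
    (kj lm : Fin d × Fin r) :
    star (fun p : Fin d × Fin r => w kj.1 p.1 * (if p.2 = kj.2 then (1:ℂ) else 0)) ⬝ᵥ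
      (fun p : Fin d × Fin r => w lm.1 p.1 * (if p.2 = lm.2 then (1:ℂ) else 0)) =
      if kj = lm then (1:ℂ) else 0 := by
  classical
  refine Eq.trans (dot_kron (w kj.1) (w lm.1) (fun b : Fin r => if b = kj.2 then (1:ℂ) else 0)
    (fun b : Fin r => if b = lm.2 then (1:ℂ) else 0)) ?_
  rw [horth]
  have he : star (fun b : Fin r => if b = kj.2 then (1:ℂ) else 0) ⬝ᵥ
      (fun b : Fin r => if b = lm.2 then (1:ℂ) else 0) = if kj.2 = lm.2 then (1:ℂ) else 0 := by
    simp only [dotProduct, Pi.star_apply]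
    have : ∀ b : Fin r, star (if b = kj.2 then (1:ℂ) else 0) * (if b = lm.2 then (1:ℂ) else 0)
        = if b = kj.2 then (if b = lm.2 then (1:ℂ) else 0) else 0 := by
      intro b
      by_cases h : b = kj.2 <;> simp [h]
    simp only [this]
    rw [Finset.sum_ite_eq' Finset.univ kj.2]
    simp
  rw [he]
  by_cases h1 : kj.1 = lm.1 <;> by_cases h2 : kj.2 = lm.2 <;>
    simp [Prod.ext_iff, h1, h2]

lemma kron_eig {d r : ℕ} (V : Matrix (Fin d) (Fin d) ℂ) (w : Fin d → Fin d → ℂ) (μ : Fin d → ℂ)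
    (heig : ∀ k, V.mulVec (w k) = μ k • w k) (kj : Fin d × Fin r) :
    (V ⊗ₖ (1 : Matrix (Fin r) (Fin r) ℂ)).mulVec
        (fun p : Fin d × Fin r => w kj.1 p.1 * (if p.2 = kj.2 then (1:ℂ) else 0)) =
      μ kj.1 • (fun p : Fin d × Fin r => w kj.1 p.1 * (if p.2 = kj.2 then (1:ℂ) else 0)) := by
  classical
  funext ⟨a, b⟩
  have hV : (∑ a', V a a' * w kj.1 a') = μ kj.1 * w kj.1 a := by
    have := congrFun (heig kj.1) a
    simpa [Matrix.mulVec, dotProduct] using this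
  simp only [Matrix.mulVec, dotProduct, Fintype.sum_prod_type, Matrix.kroneckerMap_apply,
    Matrix.one_apply, Pi.smul_apply, smul_eq_mul]
  have hinner : ∀ a' : Fin d, (∑ b' : Fin r,
      V a a' * (if b = b' then (1:ℂ) else 0) * (w kj.1 a' * (if b' = kj.2 then 1 else 0))) =
      V a a' * w kj.1 a' * (if b = kj.2 then (1:ℂ) else 0) := by
    intro a'
    have : ∀ b' : Fin r, V a a' * (if b = b' then (1:ℂ) else 0) *
        (w kj.1 a' * (if b' = kj.2 then 1 else 0)) =
        (V a a' * w kj.1 a') * ((if b = b' then (1:ℂ) else 0) * (if b' = kj.2 then 1 else 0)) := by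
      intro b'; ring
    simp only [this, ← Finset.mul_sum]
    congr 1
    simp only [ite_mul, one_mul, zero_mul]
    rw [Finset.sum_ite_eq Finset.univ b]
    simp
  simp only [hinner, ← Finset.sum_mul]
  rw [hV]
  ring

/-- Entanglement with an ancilla does not change the minimal overlap: the minimum of
`|⟨Φ|(U₁ᴴU₂ ⊗ 1_R)|Φ⟩|²` over unit vectors `Φ` of the composite system `Q ⊗ R` equals the
minimum of `|⟨φ|U₁ᴴU₂|φ⟩|²` over unit vectors `φ` of `Q` alone. -/
theorem min_overlap_ancilla_invariant {d r : ℕ} (hd : 0 < d) (hr : 0 < r)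
    (U₁ U₂ : Matrix (Fin d) (Fin d) ℂ)
    (h₁ : U₁ ∈ Matrix.unitaryGroup (Fin d) ℂ) (h₂ : U₂ ∈ Matrix.unitaryGroup (Fin d) ℂ) :
    sInf {x : ℝ | ∃ Φ : Fin d × Fin r → ℂ, (∑ p, ‖Φ p‖ ^ 2) = 1 ∧
        x = ‖star Φ ⬝ᵥ ((U₁ᴴ * U₂) ⊗ₖ (1 : Matrix (Fin r) (Fin r) ℂ)).mulVec Φ‖ ^ 2} =
    sInf {x : ℝ | ∃ φ : Fin d → ℂ, (∑ a, ‖φ a‖ ^ 2) = 1 ∧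
        x = ‖star φ ⬝ᵥ (U₁ᴴ * U₂).mulVec φ‖ ^ 2} := by
  classical
  haveI : Nonempty (Fin d) := ⟨⟨0, hd⟩⟩
  haveI : Nonempty (Fin d × Fin r) := ⟨(⟨0, hd⟩, ⟨0, hr⟩)⟩
  have hVu : U₁ᴴ * U₂ ∈ Matrix.unitaryGroup (Fin d) ℂ := by
    have h₁' : U₁ᴴ ∈ Matrix.unitaryGroup (Fin d) ℂ := by
      have := Unitary.star_mem h₁
      rwa [Matrix.star_eq_conjTranspose] at this
    exact mul_mem h₁' h₂
  obtain ⟨w, μ, horth, heig⟩ := unitary_eigenbasis (U₁ᴴ * U₂) hVu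
  have e2 := quad_form_set_eq (U₁ᴴ * U₂) w μ horth heig rfl
  have e1 := quad_form_set_eq ((U₁ᴴ * U₂) ⊗ₖ (1 : Matrix (Fin r) (Fin r) ℂ))
    (fun kj : Fin d × Fin r => fun p : Fin d × Fin r =>
      w kj.1 p.1 * (if p.2 = kj.2 then (1:ℂ) else 0))
    (fun kj => μ kj.1)
    (kron_orth w horth) (kron_eig (U₁ᴴ * U₂) w μ heig) (by simp)
  rw [e1, e2, prob_set_eq hr μ]
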